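/- Let R be a reaction network on n species such that every complex of R is unary (every y ∈ C(R) is a standard basis vector e_a of ℝⁿ), every standard basis vector e_a for a ∈ {1, …, n} belongs to C(R), and R has exactly one linkage class (the graph with vertex set C(R) and edges from R is connected). Let i, j, p, q ∈ {1, …, n} be such that the unordered pairs (multisets) {i, j} and {p, q} are distinct (i = j and p = q are allowed), and let R̂ = R ∪ {(0, e_i+e_j), (e_i+e_j, 0), (0, e_p+e_q), (e_p+e_q, 0)}, i.e., R with the reversible reactions ∅ ⇌ S_i + S_j and ∅ ⇌ S_p + S_q adjoined. Then δ(R̂) = 1. -/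

import Mathlib

open Finset

noncomputable section

namespace ReactionNetwork

/-- A (candidate) reaction network on `n` species: a finite set of ordered pairs
`(y, y')` of complexes `y, y' ∈ ℕⁿ`. -/
abbrev Rxn (n : ℕ) := Finset ((Fin n → ℕ) × (Fin n → ℕ))

/-- The set of complexes of a reaction network. -/
def complexes {n : ℕ} (R : Rxn n) : Finset (Fin n → ℕ) :=
  R.image Prod.fst ∪ R.image Prod.snd

/-- The undirected graph on the complexes of `R`, with an edge `{y, y'}` for each
reaction `(y, y') ∈ R`. -/
def linkGraph {n : ℕ} (R : Rxn n) : SimpleGraph {y // y ∈ complexes R} where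
  Adj a b := a ≠ b ∧ (((a : Fin n → ℕ), (b : Fin n → ℕ)) ∈ R ∨
    ((b : Fin n → ℕ), (a : Fin n → ℕ)) ∈ R)
  symm := ⟨fun a b h => ⟨h.1.symm, h.2.symm⟩⟩
  loopless := ⟨fun a h => h.1 rfl⟩

/-- The number of linkage classes of `R`: the number of connected components of
the undirected graph on the complexes. -/
def numLC {n : ℕ} (R : Rxn n) : ℕ :=
  Nat.card (linkGraph R).ConnectedComponent

/-- The dimension of the stoichiometric subspace of `R`. -/
def stoichDim {n : ℕ} (R : Rxn n) : ℕ :=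
  Module.finrank ℝ (Submodule.span ℝ
    {d : Fin n → ℝ | ∃ r ∈ R, d = fun i => ((r.2 i : ℝ) - (r.1 i : ℝ))})

/-- The deficiency of a reaction network: `|C(R)| - ℓ(R) - s(R)`. -/
def deficiency {n : ℕ} (R : Rxn n) : ℤ :=
  (complexes R).card - numLC R - stoichDim R

/-- The -th unit complex (one molecule of species ). -/
def unit {n : ℕ} (a : Fin n) : Fin n → ℕ := Pi.single a 1

section Aux

variable {n : ℕ}

/-- Coordinate sum of a complex. -/
def csum (y : Fin n → ℕ) : ℕ := ∑ a, y a

lemma csum_unit (a : Fin n) : csum (unit a) = 1 := by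
  simp [csum, unit, Pi.single_apply]

lemma csum_add' (y z : Fin n → ℕ) : csum (y + z) = csum y + csum z := by
  simp [csum, Finset.sum_add_distrib]

lemma csum_zero' : csum (0 : Fin n → ℕ) = 0 := by simp [csum]

lemma unit_inj : Function.Injective (unit (n := n)) := by
  intro a b h
  by_contra hne
  have := congrFun h a
  simp [unit, Pi.single_apply, hne] at this

lemma toMul_single (i : Fin n) : (∑ a, unit i a • ({a} : Multiset (Fin n))) = {i} := by
  rw [Finset.sum_eq_single i]
  · simp [unit]
  · intro b _ hb; simp [unit, Pi.single_apply, hb]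
  · simp

lemma toMul_unit_add (i j : Fin n) :
    (∑ a, (unit i + unit j) a • ({a} : Multiset (Fin n))) = {i, j} := by
  have : ∀ a : Fin n, (unit i + unit j) a • ({a} : Multiset (Fin n))
      = unit i a • ({a} : Multiset (Fin n)) + unit j a • ({a} : Multiset (Fin n)) := by
    intro a; simp [add_smul]
  rw [Finset.sum_congr rfl (fun a _ => this a), Finset.sum_add_distrib,
    toMul_single, toMul_single]
  rfl

lemma mem_complexes_fst {R : Rxn n} {r} (h : r ∈ R) : r.1 ∈ complexes R :=
  Finset.mem_union_left _ (Finset.mem_image_of_mem Prod.fst h)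

lemma mem_complexes_snd {R : Rxn n} {r} (h : r ∈ R) : r.2 ∈ complexes R :=
  Finset.mem_union_right _ (Finset.mem_image_of_mem Prod.snd h)

lemma complexes_union (R S : Rxn n) : complexes (R ∪ S) = complexes R ∪ complexes S := by
  simp only [complexes, Finset.image_union]
  ext y
  simp only [Finset.mem_union]
  tauto

/-- Telescoping along a walk: the difference of the endpoints of a walk in the
linkage graph lies in the span of the reaction vectors. -/
lemma diff_mem_span (R : Rxn n) {x y : {y // y ∈ complexes R}}
    (h : (linkGraph R).Reachable x y) :
    (fun t => ((y.1 t : ℝ) - (x.1 t : ℝ))) ∈ Submodule.span ℝ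
      {d : Fin n → ℝ | ∃ r ∈ R, d = fun i => ((r.2 i : ℝ) - (r.1 i : ℝ))} := by
  obtain ⟨w⟩ := h
  induction w with
  | @nil u =>
      have : (fun t => ((u.1 t : ℝ) - (u.1 t : ℝ))) = 0 := by
        funext t; rw [Pi.zero_apply]; ring
      rw [this]; exact zero_mem _
  | @cons u v' y hadj _ ih =>
      have hedge : (fun t => ((v'.1 t : ℝ) - (u.1 t : ℝ))) ∈ Submodule.span ℝ
          {d : Fin n → ℝ | ∃ r ∈ R, d = fun i => ((r.2 i : ℝ) - (r.1 i : ℝ))} := by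
        rcases hadj.2 with hm | hm
        · exact Submodule.subset_span ⟨((u.1 : Fin n → ℕ), (v'.1 : Fin n → ℕ)), hm, rfl⟩
        · have hg := Submodule.subset_span
            (R := ℝ) (s := {d : Fin n → ℝ | ∃ r ∈ R, d = fun i => ((r.2 i : ℝ) - (r.1 i : ℝ))})
            ⟨((v'.1 : Fin n → ℕ), (u.1 : Fin n → ℕ)), hm, rfl⟩
          have := neg_mem hg
          have heq : (fun t => ((v'.1 t : ℝ) - (u.1 t : ℝ)))
              = -(fun i => ((u.1 i : ℝ) - (v'.1 i : ℝ))) := by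
            funext t; rw [Pi.neg_apply]; ring
          rw [heq]; exact this
      have heq : (fun t => ((y.1 t : ℝ) - (u.1 t : ℝ)))
          = (fun t => ((y.1 t : ℝ) - (v'.1 t : ℝ))) + (fun t => ((v'.1 t : ℝ) - (u.1 t : ℝ))) := by
        funext t; rw [Pi.add_apply]; ring
      rw [heq]; exact add_mem ih hedge

/-- The real unit vector. -/
def uR {n : ℕ} (a : Fin n) : Fin n → ℝ := Pi.single a 1

end Aux

/-- Adjoining two distinct reversible reactions
`∅ ⇌ Sᵢ + Sⱼ` and `∅ ⇌ Sₚ + S_q` to a connected network all of whose complexes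
are unary (and containing every unary complex) yields deficiency one. -/
theorem deficiency_unary_plus_two (n : ℕ) (R : Rxn n)
    (hR : ∀ r ∈ R, r.1 ≠ r.2)
    (hunary : ∀ y ∈ complexes R, ∃ a : Fin n, y = unit a)
    (hall : ∀ a : Fin n, unit a ∈ complexes R)
    (hconn : numLC R = 1)
    (i j p q : Fin n) (hij : ({i, j} : Multiset (Fin n)) ≠ ({p, q} : Multiset (Fin n))) :
    deficiency (R ∪ {((0 : Fin n → ℕ), unit i + unit j), (unit i + unit j, (0 : Fin n → ℕ)),
      ((0 : Fin n → ℕ), unit p + unit q), (unit p + unit q, (0 : Fin n → ℕ))}) = 1 := by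
  classical
  set v : Fin n → ℕ := unit i + unit j with hv
  set w : Fin n → ℕ := unit p + unit q with hw
  set E : Rxn n := {((0 : Fin n → ℕ), v), (v, (0 : Fin n → ℕ)),
      ((0 : Fin n → ℕ), w), (w, (0 : Fin n → ℕ))} with hE
  -- basic distinctness facts via coordinate sums
  have hcsum_v : csum v = 2 := by rw [hv, csum_add', csum_unit, csum_unit]
  have hcsum_w : csum w = 2 := by rw [hw, csum_add', csum_unit, csum_unit]
  have hvw : v ≠ w := by
    intro h
    apply hij
    rw [← toMul_unit_add i j, ← toMul_unit_add p q, ← hv, ← hw, h]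
  have h0v : (0 : Fin n → ℕ) ≠ v := by
    intro h; apply_fun csum at h; rw [csum_zero', hcsum_v] at h; omega
  have h0w : (0 : Fin n → ℕ) ≠ w := by
    intro h; apply_fun csum at h; rw [csum_zero', hcsum_w] at h; omega
  have hu0 : ∀ a : Fin n, unit a ≠ (0 : Fin n → ℕ) := by
    intro a h; apply_fun csum at h; rw [csum_unit, csum_zero'] at h; omega
  have huv : ∀ a : Fin n, unit a ≠ v := by
    intro a h; apply_fun csum at h; rw [csum_unit, hcsum_v] at h; omega
  have huw : ∀ a : Fin n, unit a ≠ w := by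
    intro a h; apply_fun csum at h; rw [csum_unit, hcsum_w] at h; omega
  -- the complexes of the new network
  have hCE : complexes E = {(0 : Fin n → ℕ), v, w} := by
    rw [hE]
    simp only [complexes]
    ext y
    simp only [Finset.image_insert, Finset.image_singleton, Finset.mem_union,
      Finset.mem_insert, Finset.mem_singleton]
    tauto
  have hCR : complexes R = Finset.univ.image unit := by
    ext y
    simp only [Finset.mem_image, Finset.mem_univ, true_and]
    constructor
    · intro hy; obtain ⟨a, rfl⟩ := hunary y hy; exact ⟨a, rfl⟩
    · rintro ⟨a, rfl⟩; exact hall a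
  have hCRE : complexes (R ∪ E) = Finset.univ.image unit ∪ {(0 : Fin n → ℕ), v, w} := by
    rw [complexes_union, hCR, hCE]
  -- cardinality of the complexes
  have hdisj : Disjoint (Finset.univ.image (unit (n := n)))
      ({(0 : Fin n → ℕ), v, w} : Finset (Fin n → ℕ)) := by
    rw [Finset.disjoint_left]
    rintro y hy hmem
    obtain ⟨a, -, rfl⟩ := Finset.mem_image.mp hy
    simp only [Finset.mem_insert, Finset.mem_singleton] at hmem
    rcases hmem with h | h | h
    · exact hu0 a h
    · exact huv a h
    · exact huw a h
  have hcard3 : ({(0 : Fin n → ℕ), v, w} : Finset (Fin n → ℕ)).card = 3 := by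
    rw [Finset.card_insert_of_notMem, Finset.card_insert_of_notMem, Finset.card_singleton]
    · simpa using hvw
    · simp only [Finset.mem_insert, Finset.mem_singleton]
      push_neg
      exact ⟨h0v, h0w⟩
  have hcardC : (complexes (R ∪ E)).card = n + 3 := by
    rw [hCRE, Finset.card_union_of_disjoint hdisj, Finset.card_image_of_injective _ unit_inj,
      Finset.card_univ, Fintype.card_fin, hcard3]
  -- a base species
  have hne : Nonempty (linkGraph R).ConnectedComponent := by
    rw [numLC] at hconn
    exact (Nat.card_ne_zero.mp (by omega)).1
  obtain ⟨c⟩ := hne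
  obtain ⟨z, -⟩ := c.exists_rep
  obtain ⟨a₀, -⟩ := hunary z.1 z.2
  -- reachability in the original graph
  have hsub : Subsingleton (linkGraph R).ConnectedComponent :=
    (Nat.card_eq_one_iff_unique.mp hconn).1
  have hreach : ∀ x y : {y // y ∈ complexes R}, (linkGraph R).Reachable x y := by
    intro x y
    exact SimpleGraph.ConnectedComponent.eq.mp (Subsingleton.elim _ _)
  -- the graph homomorphism from the old graph to the new one
  let F : linkGraph R →g linkGraph (R ∪ E) :=
    { toFun := fun z => ⟨z.1, by rw [complexes_union]; exact Finset.mem_union_left _ z.2⟩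
      map_rel' := by
        intro a b hab
        refine ⟨?_, ?_⟩
        · intro h
          simp only [Subtype.mk.injEq] at h
          exact hab.1 (Subtype.ext h)
        · exact hab.2.imp (fun h => Finset.mem_union_left _ h) (fun h => Finset.mem_union_left _ h) }
  -- membership of the new complexes
  have hmem0E : ((0 : Fin n → ℕ), v) ∈ R ∪ E := by
    apply Finset.mem_union_right; rw [hE]; simp
  have hmemv0E : (v, (0 : Fin n → ℕ)) ∈ R ∪ E := by
    apply Finset.mem_union_right; rw [hE]; simp
  have hmem0wE : ((0 : Fin n → ℕ), w) ∈ R ∪ E := by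
    apply Finset.mem_union_right; rw [hE]; simp
  have hmemw0E : (w, (0 : Fin n → ℕ)) ∈ R ∪ E := by
    apply Finset.mem_union_right; rw [hE]; simp
  have hmem0 : (0 : Fin n → ℕ) ∈ complexes (R ∪ E) := mem_complexes_fst hmem0E
  have hmemv : v ∈ complexes (R ∪ E) := mem_complexes_snd hmem0E
  have hmemw : w ∈ complexes (R ∪ E) := mem_complexes_snd hmem0wE
  have hmemu : ∀ a : Fin n, unit a ∈ complexes (R ∪ E) := by
    intro a; rw [complexes_union]; exact Finset.mem_union_left _ (hall a)
  -- distinguished vertices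
  set z0 : {y // y ∈ complexes (R ∪ E)} := ⟨0, hmem0⟩ with hz0
  set zv : {y // y ∈ complexes (R ∪ E)} := ⟨v, hmemv⟩ with hzv
  set zw : {y // y ∈ complexes (R ∪ E)} := ⟨w, hmemw⟩ with hzw
  -- the parity invariant: coordinate sum equal to one is preserved by edges
  have hadj_inv : ∀ x y : {y // y ∈ complexes (R ∪ E)}, (linkGraph (R ∪ E)).Adj x y →
      (csum x.1 = 1 ↔ csum y.1 = 1) := by
    have key : ∀ x y : Fin n → ℕ, (x, y) ∈ R ∪ E → (csum x = 1 ↔ csum y = 1) := by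
      intro x y hm
      rcases Finset.mem_union.mp hm with hm | hm
      · obtain ⟨a, ha⟩ := hunary x (mem_complexes_fst hm)
        obtain ⟨b, hb⟩ := hunary y (mem_complexes_snd hm)
        rw [ha, hb, csum_unit, csum_unit]
      · rw [hE] at hm
        simp only [Finset.mem_insert, Finset.mem_singleton, Prod.mk.injEq] at hm
        rcases hm with ⟨h1, h2⟩ | ⟨h1, h2⟩ | ⟨h1, h2⟩ | ⟨h1, h2⟩ <;>
          subst h1 <;> subst h2 <;>
          simp [csum_zero', hcsum_v, hcsum_w]
    intro x y hxy
    rcases hxy.2 with hm | hm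
    · exact key _ _ hm
    · exact (key _ _ hm).symm
  have hreach_inv : ∀ x y : {y // y ∈ complexes (R ∪ E)}, (linkGraph (R ∪ E)).Reachable x y →
      (csum x.1 = 1 ↔ csum y.1 = 1) := by
    intro x y h
    obtain ⟨wlk⟩ := h
    induction wlk with
    | nil => exact Iff.rfl
    | cons hadj _ ih => exact (hadj_inv _ _ hadj).trans ih
  -- adjacency of the new complexes to zero
  have hadj0v : (linkGraph (R ∪ E)).Adj z0 zv :=
    ⟨fun h => h0v (congrArg Subtype.val h), Or.inl hmem0E⟩
  have hadj0w : (linkGraph (R ∪ E)).Adj z0 zw :=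
    ⟨fun h => h0w (congrArg Subtype.val h), Or.inl hmem0wE⟩
  -- the linkage classes of the new network
  have hnumLC : numLC (R ∪ E) = 2 := by
    rw [numLC, Nat.card_eq_two_iff]
    refine ⟨(linkGraph (R ∪ E)).connectedComponentMk z0,
      (linkGraph (R ∪ E)).connectedComponentMk ⟨unit a₀, hmemu a₀⟩, ?_, ?_⟩
    · intro h
      have hr := SimpleGraph.ConnectedComponent.eq.mp h
      have := (hreach_inv _ _ hr).mpr (by simpa using csum_unit a₀)
      rw [hz0] at this
      simp only [csum_zero'] at this
      omega
    · rw [Set.eq_univ_iff_forall]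
      intro c
      obtain ⟨z, rfl⟩ := c.exists_rep
      obtain ⟨zval, hzm⟩ := z
      have hz : zval ∈ Finset.univ.image unit ∪ ({(0 : Fin n → ℕ), v, w} : Finset _) := by
        rw [← hCRE]; exact hzm
      simp only [Finset.mem_union, Finset.mem_image, Finset.mem_univ, true_and,
        Finset.mem_insert, Finset.mem_singleton] at hz
      show (linkGraph (R ∪ E)).connectedComponentMk ⟨zval, hzm⟩ ∈ _
      simp only [Set.mem_insert_iff, Set.mem_singleton_iff]
      rcases hz with ⟨a, ha⟩ | h | h | h
      · -- a unary complex is reachable from `unit a₀`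
        right
        subst ha
        exact SimpleGraph.ConnectedComponent.eq.mpr
          ((hreach ⟨unit a, hall a⟩ ⟨unit a₀, hall a₀⟩).map F)
      · left
        subst h
        exact congrArg _ (Subtype.ext rfl)
      · left
        subst h
        exact ((congrArg (linkGraph (R ∪ E)).connectedComponentMk
          (Subtype.ext rfl : (⟨v, hzm⟩ : {y // y ∈ complexes (R ∪ E)}) = zv))).trans
          (SimpleGraph.ConnectedComponent.eq.mpr hadj0v.symm.reachable)
      · left
        subst h
        exact ((congrArg (linkGraph (R ∪ E)).connectedComponentMk
          (Subtype.ext rfl : (⟨w, hzm⟩ : {y // y ∈ complexes (R ∪ E)}) = zw))).trans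
          (SimpleGraph.ConnectedComponent.eq.mpr hadj0w.symm.reachable)
  -- the stoichiometric subspace of the new network is everything
  have hcastu : ∀ (a : Fin n) (t : Fin n), ((unit a t : ℕ) : ℝ) = uR a t := by
    intro a t
    by_cases h : t = a <;> simp [unit, uR, Pi.single_apply, h]
  set Sp : Submodule ℝ (Fin n → ℝ) := Submodule.span ℝ
    {d : Fin n → ℝ | ∃ r ∈ R ∪ E, d = fun t => ((r.2 t : ℝ) - (r.1 t : ℝ))} with hSp
  have hdiff : ∀ a b : Fin n, (uR b - uR a) ∈ Sp := by
    intro a b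
    have h1 := diff_mem_span R (hreach ⟨unit a, hall a⟩ ⟨unit b, hall b⟩)
    have h2 : (fun t => ((unit b t : ℝ) - (unit a t : ℝ))) ∈ Sp := by
      refine Submodule.span_mono ?_ h1
      rintro d ⟨r, hr, hd⟩
      exact ⟨r, Finset.mem_union_left _ hr, hd⟩
    have heq : (fun t => ((unit b t : ℝ) - (unit a t : ℝ)))
        = uR b - uR a := by
      funext t; rw [Pi.sub_apply, hcastu, hcastu]
    rw [← heq]
    exact h2
  have hvmem : (uR i + uR j) ∈ Sp := by
    have h1 : (fun t => ((v t : ℝ) - (((0 : Fin n → ℕ)) t : ℝ))) ∈ Sp :=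
      Submodule.subset_span ⟨((0 : Fin n → ℕ), v), hmem0E, rfl⟩
    have heq : (fun t => ((v t : ℝ) - (((0 : Fin n → ℕ)) t : ℝ)))
        = uR i + uR j := by
      funext t
      rw [hv]
      simp only [Pi.add_apply, Pi.zero_apply, Nat.cast_add, Nat.cast_zero, sub_zero]
      rw [hcastu, hcastu]
    rw [← heq]
    exact h1
  have hsingle0 : uR a₀ ∈ Sp := by
    have hkey : uR a₀ = (2⁻¹ : ℝ) •
        ((uR i + uR j) - (uR i - uR a₀) - (uR j - uR a₀)) := by
      funext t
      simp only [Pi.smul_apply, Pi.sub_apply, Pi.add_apply, smul_eq_mul]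
      ring
    rw [hkey]
    exact Submodule.smul_mem _ _ (sub_mem (sub_mem hvmem (hdiff a₀ i)) (hdiff a₀ j))
  have hsingle : ∀ a : Fin n, uR a ∈ Sp := by
    intro a
    have : uR a = (uR a - uR a₀) + uR a₀ := by
      funext t; simp only [Pi.add_apply, Pi.sub_apply]; ring
    rw [this]
    exact add_mem (hdiff a₀ a) hsingle0
  have hSpTop : Sp = ⊤ := by
    rw [eq_top_iff, ← (Pi.basisFun ℝ (Fin n)).span_eq]
    apply Submodule.span_le.mpr
    rintro d ⟨a, rfl⟩
    rw [SetLike.mem_coe, Pi.basisFun_apply]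
    exact hsingle a
  have hsdim : stoichDim (R ∪ E) = n := by
    rw [stoichDim]
    rw [show (Submodule.span ℝ
        {d : Fin n → ℝ | ∃ r ∈ R ∪ E, d = fun t => ((r.2 t : ℝ) - (r.1 t : ℝ))}) = ⊤ from hSpTop]
    rw [finrank_top, Module.finrank_fintype_fun_eq_card, Fintype.card_fin]
  -- put it all together
  rw [deficiency, hcardC, hnumLC, hsdim]
  push_cast
  ring

end ReactionNetwork
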